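/- Let R > 0 and let f : [0,R] × (ℝ/2πℤ) → ℝ be continuously differentiable. Assume that for every t ∈ [0,R] there exist θ₁, θ₂ ∈ ℝ/2πℤ with |f(t,θ₂) − f(t,θ₁)| ≥ 1. Then ∫_{[0,R]×(ℝ/2πℤ)} ((∂f/∂t)² + (∂f/∂θ)²) dt dθ ≥ R/(2π). -/

import Mathlib

open Real MeasureTheory intervalIntegral

/-- Cauchy–Schwarz on `[0, 2π]`. -/
lemma cs_aux (h : ℝ → ℝ) (hc : Continuous h) :
    (∫ θ in (0:ℝ)..(2 * π), h θ) ^ 2 ≤ (2 * π) * ∫ θ in (0:ℝ)..(2 * π), (h θ) ^ 2 := by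
  have hπ : 0 < 2 * π := by positivity
  set I := ∫ θ in (0:ℝ)..(2 * π), h θ with hI
  set a := I / (2 * π) with ha
  have hi1 : IntervalIntegrable (fun θ => (h θ) ^ 2) volume 0 (2 * π) :=
    (hc.pow 2).intervalIntegrable _ _
  have hi2 : IntervalIntegrable (fun θ => 2 * a * h θ) volume 0 (2 * π) :=
    (continuous_const.mul hc).intervalIntegrable _ _
  have e : ∫ θ in (0:ℝ)..(2 * π), (h θ - a) ^ 2
      = (∫ θ in (0:ℝ)..(2 * π), (h θ) ^ 2) - 2 * a * I + (2 * π) * a ^ 2 := by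
    have key : ∀ θ : ℝ, (h θ - a) ^ 2 = (h θ) ^ 2 - 2 * a * h θ + a ^ 2 := fun θ => by ring
    simp_rw [key]
    rw [intervalIntegral.integral_add (hi1.sub hi2) (intervalIntegrable_const),
      intervalIntegral.integral_sub hi1 hi2, intervalIntegral.integral_const_mul,
      intervalIntegral.integral_const]
    simp only [smul_eq_mul, sub_zero, ← hI]
    try ring
  have h0 : (0:ℝ) ≤ ∫ θ in (0:ℝ)..(2 * π), (h θ - a) ^ 2 :=
    intervalIntegral.integral_nonneg hπ.le (fun x _ => sq_nonneg _)
  rw [e, ha] at h0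
  set S := ∫ θ in (0:ℝ)..(2 * π), (h θ) ^ 2 with hS
  have hπ' : (π:ℝ) ≠ 0 := pi_ne_zero
  have e1 : 2 * (I / (2 * π)) * I = I ^ 2 / π := by field_simp
  have e2 : 2 * π * (I / (2 * π)) ^ 2 = I ^ 2 / (2 * π) := by field_simp
  have e3 : I ^ 2 / π - I ^ 2 / (2 * π) = I ^ 2 / (2 * π) := by field_simp; ring
  rw [e1, e2] at h0
  have h1 : I ^ 2 / (2 * π) ≤ S := by linarith
  have h2 := (div_le_iff₀ hπ).mp h1
  linarith

/-- Crossing estimate for circles on the flat cylinder `[0,R] × (ℝ/2πℤ)`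
(functions on the cylinder are encoded as `2π`-periodic functions in the second
variable).  If on every circle `{t} × (ℝ/2πℤ)` the function `f` varies by at least
`1`, then the Dirichlet energy of `f` is at least `R/(2π)`. -/
theorem crossing_estimate_circles (R : ℝ) (hR : 0 < R) (f : ℝ × ℝ → ℝ)
    (hf : ContDiff ℝ 1 f)
    (hper : ∀ t θ : ℝ, f (t, θ + 2 * π) = f (t, θ))
    (hcross : ∀ t : ℝ, 0 ≤ t → t ≤ R → ∃ θ₁ θ₂ : ℝ,
      1 ≤ |f (t, θ₂) - f (t, θ₁)|) :
    R / (2 * π) ≤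
      ∫ t in (0:ℝ)..R, ∫ θ in (0:ℝ)..(2 * π),
        (fderiv ℝ f (t, θ) (1, 0)) ^ 2 + (fderiv ℝ f (t, θ) (0, 1)) ^ 2 := by
  have hπ : 0 < 2 * π := by positivity
  have hdf : Continuous fun p : ℝ × ℝ => fderiv ℝ f p := hf.continuous_fderiv one_ne_zero
  -- continuity of the two directional derivatives
  have hc1 : Continuous fun p : ℝ × ℝ => fderiv ℝ f p (1, 0) :=
    hdf.clm_apply continuous_const
  have hc2 : Continuous fun p : ℝ × ℝ => fderiv ℝ f p (0, 1) :=
    hdf.clm_apply continuous_const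
  -- the derivative along circles
  have hderiv : ∀ t θ : ℝ, HasDerivAt (fun θ => f (t, θ)) (fderiv ℝ f (t, θ) (0, 1)) θ := by
    intro t θ
    have hcurve : HasDerivAt (fun θ : ℝ => ((t, θ) : ℝ × ℝ)) ((0 : ℝ), (1 : ℝ)) θ :=
      HasDerivAt.prodMk (hasDerivAt_const θ t) (hasDerivAt_id θ)
    exact ((hf.differentiable one_ne_zero (t, θ)).hasFDerivAt).comp_hasDerivAt θ hcurve
  -- periodicity of the derivative
  have hper' : ∀ t : ℝ, Function.Periodic (fun θ => fderiv ℝ f (t, θ) (0, 1)) (2 * π) := by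
    intro t θ
    have heq : (fun x : ℝ => f (t, x + 2 * π)) = fun x => f (t, x) :=
      funext fun x => hper t x
    have h1 : HasDerivAt (fun x : ℝ => f (t, x + 2 * π))
        (fderiv ℝ f (t, θ + 2 * π) (0, 1)) θ := by
      have := (hderiv t (θ + 2 * π)).comp θ ((hasDerivAt_id θ).add_const (2 * π))
      simpa [Function.comp_def] using this
    rw [heq] at h1
    exact h1.unique (hderiv t θ)
  -- key pointwise bound: for each t in [0,R], the inner circle integral is ≥ 1/(2π)
  have hkey : ∀ t : ℝ, 0 ≤ t → t ≤ R →
      1 / (2 * π) ≤ ∫ θ in (0:ℝ)..(2 * π), (fderiv ℝ f (t, θ) (0, 1)) ^ 2 := by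
    intro t ht0 htR
    set g' : ℝ → ℝ := fun θ => fderiv ℝ f (t, θ) (0, 1) with hg'
    have hg'c : Continuous g' := hc2.comp (Continuous.prodMk_right t)
    obtain ⟨θ₁, θ₂, hθ⟩ := hcross t ht0 htR
    -- replace θ₂ by a point in [θ₁, θ₁ + 2π] with the same value
    set k : ℤ := ⌊(θ₂ - θ₁) / (2 * π)⌋ with hk
    set c : ℝ := θ₂ - k * (2 * π) with hc
    have hgper : Function.Periodic (fun θ => f (t, θ)) (2 * π) := fun θ => hper t θ
    have hgc : f (t, c) = f (t, θ₂) := by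
      have := (hgper.int_mul k) c
      simp only [hc] at this ⊢
      rw [← this]
      ring_nf
    have hc1' : θ₁ ≤ c := by
      have h1 : (k : ℝ) ≤ (θ₂ - θ₁) / (2 * π) := Int.floor_le _
      have := (div_le_div_iff_of_pos_right hπ).mpr h1
      rw [hc]
      nlinarith [(mul_le_mul_of_nonneg_right h1 hπ.le), (div_mul_cancel₀ (θ₂ - θ₁) hπ.ne')]
    have hc2' : c ≤ θ₁ + 2 * π := by
      have h1 : (θ₂ - θ₁) / (2 * π) < k + 1 := Int.lt_floor_add_one _
      rw [hc]
      nlinarith [(mul_lt_mul_of_pos_right h1 hπ), (div_mul_cancel₀ (θ₂ - θ₁) hπ.ne')]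
    -- FTC
    have hftc : ∫ θ in θ₁..c, g' θ = f (t, c) - f (t, θ₁) :=
      intervalIntegral.integral_eq_sub_of_hasDerivAt (fun x _ => hderiv t x)
        (hg'c.intervalIntegrable _ _)
    have h1le : 1 ≤ ∫ θ in θ₁..(θ₁ + 2 * π), |g' θ| := by
      have step1 : 1 ≤ |∫ θ in θ₁..c, g' θ| := by
        rw [hftc, hgc]; exact hθ
      have step2 : |∫ θ in θ₁..c, g' θ| ≤ ∫ θ in θ₁..c, |g' θ| := by
        exact intervalIntegral.abs_integral_le_integral_abs hc1'
      have step3 : (∫ θ in θ₁..c, |g' θ|) ≤ ∫ θ in θ₁..(θ₁ + 2 * π), |g' θ| := by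
        rw [← intervalIntegral.integral_add_adjacent_intervals
          ((hg'c.abs).intervalIntegrable θ₁ c) ((hg'c.abs).intervalIntegrable c (θ₁ + 2 * π))]
        have : (0:ℝ) ≤ ∫ θ in c..(θ₁ + 2 * π), |g' θ| :=
          intervalIntegral.integral_nonneg hc2' (fun x _ => abs_nonneg _)
        linarith
      linarith
    have habs : Function.Periodic (fun θ => |g' θ|) (2 * π) := fun x =>
      congrArg abs (hper' t x)
    have hperint : (∫ θ in θ₁..(θ₁ + 2 * π), |g' θ|) = ∫ θ in (0:ℝ)..(2 * π), |g' θ| := by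
      have := habs.intervalIntegral_add_eq θ₁ 0
      simpa using this
    rw [hperint] at h1le
    -- Cauchy–Schwarz
    have hcs := cs_aux (fun θ => |g' θ|) hg'c.abs
    simp only [sq_abs] at hcs
    have hI0 : (0:ℝ) ≤ ∫ θ in (0:ℝ)..(2 * π), |g' θ| :=
      intervalIntegral.integral_nonneg hπ.le (fun x _ => abs_nonneg _)
    have h1 : 1 ≤ (∫ θ in (0:ℝ)..(2 * π), |g' θ|) ^ 2 := by nlinarith
    have h2 : (1:ℝ) ≤ (2 * π) * ∫ θ in (0:ℝ)..(2 * π), (g' θ) ^ 2 := le_trans h1 hcs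
    rw [div_le_iff₀ hπ]
    linarith [h2]
  -- inner integral bounded below by 1/(2π) on [0,R]
  set G : ℝ → ℝ := fun t => ∫ θ in (0:ℝ)..(2 * π),
    (fderiv ℝ f (t, θ) (1, 0)) ^ 2 + (fderiv ℝ f (t, θ) (0, 1)) ^ 2 with hG
  have hGc : Continuous G := by
    apply intervalIntegral.continuous_parametric_intervalIntegral_of_continuous'
    exact ((hc1.pow 2).add (hc2.pow 2)).comp
      (continuous_fst.prodMk continuous_snd) |>.comp continuous_id |>.comp
      (continuous_fst.prodMk continuous_snd)
  have hGlb : ∀ t ∈ Set.Icc (0:ℝ) R, 1 / (2 * π) ≤ G t := by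
    intro t ht
    have hinner : (∫ θ in (0:ℝ)..(2 * π), (fderiv ℝ f (t, θ) (0, 1)) ^ 2) ≤ G t := by
      apply intervalIntegral.integral_mono_on hπ.le
      · exact ((hc2.comp (Continuous.prodMk_right t)).pow 2).intervalIntegrable _ _
      · exact (((hc1.comp (Continuous.prodMk_right t)).pow 2).add
          ((hc2.comp (Continuous.prodMk_right t)).pow 2)).intervalIntegrable _ _
      · intro x _; nlinarith [sq_nonneg (fderiv ℝ f (t, x) (1, 0))]
    exact le_trans (hkey t ht.1 ht.2) hinner
  have hmain : (∫ t in (0:ℝ)..R, (1 / (2 * π) : ℝ)) ≤ ∫ t in (0:ℝ)..R, G t := by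
    apply intervalIntegral.integral_mono_on hR.le intervalIntegrable_const
      (hGc.intervalIntegrable _ _)
    exact hGlb
  rw [intervalIntegral.integral_const] at hmain
  simp only [smul_eq_mul, sub_zero] at hmain
  calc R / (2 * π) = R * (1 / (2 * π)) := by ring
    _ ≤ ∫ t in (0:ℝ)..R, G t := hmain
    _ = _ := rfl
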